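/- Determinants as squared overlap determinants: let I ⊆ ℝ be a Borel set such that the index sets J_I(A) := {j ∈ {1,…,M} : a_j ∈ I} and J_I(B) := {k ∈ {1,…,M} : b_k ∈ I} have the same cardinality. Then det(1 − 1_I(A) 1_{I^c}(B) 1_I(A)) = det(1 − 1_{I^c}(A) 1_I(B) 1_{I^c}(A)) = |det((⟨φ_j, ψ_k⟩)_{j ∈ J_I(A), k ∈ J_I(B)})|², where the inner determinant is over the square matrix of overlaps indexed by J_I(A) × J_I(B) with indices in increasing order. -/

import Mathlib

open Matrix MeasureTheory
open scoped Classical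

/-- The spectral projection `1_I(A)` of a Hermitian matrix with orthonormal eigenbasis `φ`
and eigenvalues `a`, associated with the set `I ⊆ ℝ`. -/
noncomputable def specProj {M : ℕ} (a : Fin M → ℝ) (φ : Fin M → Fin M → ℂ) (I : Set ℝ) :
    Matrix (Fin M) (Fin M) ℂ :=
  ∑ j : Fin M, if a j ∈ I then Matrix.vecMulVec (φ j) (star (φ j)) else 0

lemma specProj_eq {M : ℕ} (a : Fin M → ℝ) (φ : Fin M → Fin M → ℂ) (I' : Set ℝ) :
    specProj a φ I' = (Matrix.of fun i j => φ j i) *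
      Matrix.diagonal (fun j => if a j ∈ I' then (1:ℂ) else 0) *
      (Matrix.of fun i j => φ j i)ᴴ := by
  ext i k
  conv_rhs => rw [Matrix.mul_apply]
  simp only [Matrix.mul_diagonal, Matrix.conjTranspose_apply, Matrix.of_apply,
    specProj, Matrix.sum_apply]
  apply Finset.sum_congr rfl
  intro j _
  by_cases h : a j ∈ I' <;>
    simp [h, Matrix.vecMulVec_apply]

lemma submatrix_one_inj {m k : Type*} [DecidableEq m] [DecidableEq k] {f : k → m}
    (hf : Function.Injective f) :
    (1 : Matrix m m ℂ).submatrix f f = 1 := by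
  ext i j
  simp [Matrix.submatrix_apply, Matrix.one_apply, hf.eq_iff]

lemma det_corner {M : ℕ} (J : Finset (Fin M)) (N : Matrix (Fin M) (Fin M) ℂ) :
    Matrix.det (1 - Matrix.diagonal (fun j => if j ∈ J then (1:ℂ) else 0) * N *
      Matrix.diagonal (fun j => if j ∈ J then (1:ℂ) else 0)) =
    Matrix.det ((1 : Matrix J J ℂ) -
      N.submatrix (fun i : J => (i : Fin M)) (fun i : J => (i : Fin M))) := by
  set D := Matrix.diagonal (fun j => if j ∈ J then (1:ℂ) else 0) with hD
  set e : {x : Fin M // x ∈ J} ⊕ {x : Fin M // x ∉ J} ≃ Fin M := Equiv.sumCompl (· ∈ J)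
  have key : (1 - D * N * D).submatrix e e =
      Matrix.fromBlocks
        ((1 : Matrix J J ℂ) - N.submatrix (fun i : J => (i : Fin M)) (fun i : J => (i : Fin M)))
        0 0 (1 : Matrix {x : Fin M // x ∉ J} {x : Fin M // x ∉ J} ℂ) := by
    have hentry : ∀ i j : Fin M, (D * N * D) i j
        = (if i ∈ J then (1:ℂ) else 0) * N i j * (if j ∈ J then (1:ℂ) else 0) := by
      intro i j
      rw [hD, Matrix.mul_diagonal, Matrix.diagonal_mul]
    ext i j
    rcases i with i | i <;> rcases j with j | j <;>
      simp [Matrix.submatrix_apply, Matrix.fromBlocks, Matrix.sub_apply, hentry,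
        Matrix.one_apply, e, i.2, j.2, Subtype.val_inj] <;>
      first
        | (intro h; exact absurd (h ▸ i.2) j.2)
        | (intro h; exact absurd (h ▸ j.2) i.2)
  rw [← Matrix.det_submatrix_equiv_self e, key, Matrix.det_fromBlocks_zero₂₁, Matrix.det_one,
    mul_one]

/-- **Determinants as squared overlap determinants.** Let `B = A + v v*` with `v` cyclic for
the Hermitian matrix `A`, with eigenvalues `a`, `b` (ordered, with multiplicity) and orthonormal
eigenbases `φ`, `ψ`. Let `I ⊆ ℝ` be a Borel set such that the index sets
`J₁ = {j : a j ∈ I}` and `J₂ = {k : b k ∈ I}` have the same cardinality `n`, and let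
`S` be the `n × n` matrix of overlaps `⟨φ_j, ψ_k⟩`, `j ∈ J₁`, `k ∈ J₂`, with the indices in
increasing order. Then
`det(1 - 1_I(A) 1_{Iᶜ}(B) 1_I(A)) = det(1 - 1_{Iᶜ}(A) 1_I(B) 1_{Iᶜ}(A)) = |det S|²`. -/
theorem det_eq_overlap_det_sq
    (M : ℕ) (hM : 1 ≤ M)
    (A : Matrix (Fin M) (Fin M) ℂ) (hA : A.IsHermitian)
    (v : Fin M → ℂ)
    (hcyc : Submodule.span ℂ (Set.range fun k : Fin M => (A ^ (k : ℕ)) *ᵥ v) = ⊤)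
    (B : Matrix (Fin M) (Fin M) ℂ) (hB : B = A + Matrix.vecMulVec v (star v))
    (a b : Fin M → ℝ) (hamono : Monotone a) (hbmono : Monotone b)
    (φ ψ : Fin M → Fin M → ℂ)
    (hφortho : ∀ j k, star (φ j) ⬝ᵥ φ k = (if j = k then (1 : ℂ) else 0))
    (hψortho : ∀ j k, star (ψ j) ⬝ᵥ ψ k = (if j = k then (1 : ℂ) else 0))
    (hφeig : ∀ j, A *ᵥ φ j = (a j : ℂ) • φ j)
    (hψeig : ∀ k, B *ᵥ ψ k = (b k : ℂ) • ψ k)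
    (I : Set ℝ) (hImeas : MeasurableSet I)
    (J₁ J₂ : Finset (Fin M))
    (hJ₁ : ∀ j, j ∈ J₁ ↔ a j ∈ I) (hJ₂ : ∀ k, k ∈ J₂ ↔ b k ∈ I)
    (n : ℕ) (h₁ : J₁.card = n) (h₂ : J₂.card = n)
    (S : Matrix (Fin n) (Fin n) ℂ)
    (hS : ∀ j k, S j k = star (φ (J₁.orderIsoOfFin h₁ j).1) ⬝ᵥ ψ (J₂.orderIsoOfFin h₂ k).1) :
    Matrix.det (1 - specProj a φ I * specProj b ψ Iᶜ * specProj a φ I) =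
      Matrix.det (1 - specProj a φ Iᶜ * specProj b ψ I * specProj a φ Iᶜ) ∧
    Matrix.det (1 - specProj a φ I * specProj b ψ Iᶜ * specProj a φ I) =
      ((‖S.det‖ ^ 2 : ℝ) : ℂ) := by
  classical
  set U : Matrix (Fin M) (Fin M) ℂ := Matrix.of fun i j => φ j i with hUdef
  set V : Matrix (Fin M) (Fin M) ℂ := Matrix.of fun i j => ψ j i with hVdef
  have hUu : Uᴴ * U = 1 := by
    ext j k
    simpa [hUdef, Matrix.mul_apply, Matrix.conjTranspose_apply, Matrix.one_apply,
      dotProduct] using hφortho j k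
  have hVu : Vᴴ * V = 1 := by
    ext j k
    simpa [hVdef, Matrix.mul_apply, Matrix.conjTranspose_apply, Matrix.one_apply,
      dotProduct] using hψortho j k
  have hUu' : U * Uᴴ = 1 := mul_eq_one_comm.mp hUu
  set W : Matrix (Fin M) (Fin M) ℂ := Uᴴ * V with hWdef
  have hWapp : ∀ j k, W j k = star (φ j) ⬝ᵥ ψ k := by
    intro j k
    simp [hWdef, hUdef, hVdef, Matrix.mul_apply, Matrix.conjTranspose_apply, dotProduct]
  have hW1 : Wᴴ * W = 1 := by
    rw [hWdef, Matrix.conjTranspose_mul, Matrix.conjTranspose_conjTranspose,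
      Matrix.mul_assoc, ← Matrix.mul_assoc U, hUu', Matrix.one_mul, hVu]
  have hW2 : W * Wᴴ = 1 := mul_eq_one_comm.mp hW1
  -- the main conjugation step
  have hdet : ∀ (I₁ I₂ : Set ℝ) (K₁ K₂ : Finset (Fin M)),
      (∀ j, j ∈ K₁ ↔ a j ∈ I₁) → (∀ j, j ∈ K₂ ↔ b j ∈ I₂) →
      Matrix.det (1 - specProj a φ I₁ * specProj b ψ I₂ * specProj a φ I₁) =
      Matrix.det (1 - Matrix.diagonal (fun j => if j ∈ K₁ then (1:ℂ) else 0) *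
        (W * Matrix.diagonal (fun j => if j ∈ K₂ then (1:ℂ) else 0) * Wᴴ) *
        Matrix.diagonal (fun j => if j ∈ K₁ then (1:ℂ) else 0)) := by
    intro I₁ I₂ K₁ K₂ hK₁ hK₂
    have hd₁ : (fun j => if a j ∈ I₁ then (1:ℂ) else 0) =
        (fun j => if j ∈ K₁ then (1:ℂ) else 0) := by
      funext j; exact if_congr (hK₁ j).symm rfl rfl
    have hd₂ : (fun j => if b j ∈ I₂ then (1:ℂ) else 0) =
        (fun j => if j ∈ K₂ then (1:ℂ) else 0) := by
      funext j; exact if_congr (hK₂ j).symm rfl rfl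
    set D := Matrix.diagonal (fun j => if j ∈ K₁ then (1:ℂ) else 0) with hDdef
    set E := Matrix.diagonal (fun j => if j ∈ K₂ then (1:ℂ) else 0) with hEdef
    have h1 : specProj a φ I₁ * specProj b ψ I₂ * specProj a φ I₁ =
        U * (D * (W * E * Wᴴ) * D) * Uᴴ := by
      rw [specProj_eq a φ I₁, specProj_eq b ψ I₂, hd₁, hd₂]
      rw [hWdef]
      simp only [Matrix.conjTranspose_mul, Matrix.conjTranspose_conjTranspose,
        Matrix.mul_assoc, ← hUdef, ← hVdef, ← hDdef, ← hEdef]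
    have h2 : (1 : Matrix (Fin M) (Fin M) ℂ) -
        specProj a φ I₁ * specProj b ψ I₂ * specProj a φ I₁ =
        U * (1 - D * (W * E * Wᴴ) * D) * Uᴴ := by
      rw [h1, Matrix.mul_sub, Matrix.sub_mul, Matrix.mul_one, hUu']
    rw [h2, Matrix.det_mul, Matrix.det_mul]
    have hu1 : U.det * Uᴴ.det = 1 := by
      rw [← Matrix.det_mul, hUu', Matrix.det_one]
    calc U.det * (1 - D * (W * E * Wᴴ) * D).det * Uᴴ.det
        = (1 - D * (W * E * Wᴴ) * D).det * (U.det * Uᴴ.det) := by ring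
      _ = (1 - D * (W * E * Wᴴ) * D).det := by rw [hu1, mul_one]
  -- set up the block data
  set N : Matrix (Fin M) (Fin M) ℂ :=
    W * Matrix.diagonal (fun j => if j ∈ J₂ then (1:ℂ) else 0) * Wᴴ with hNdef
  set S' : Matrix J₁ J₂ ℂ := Matrix.of fun j k => W j k with hS'def
  set T' : Matrix ↥(J₁ᶜ) J₂ ℂ := Matrix.of fun j k => W j k with hT'def
  -- the complement of the J₂ projection
  have hEc : Matrix.diagonal (fun j : Fin M => if j ∈ J₂ᶜ then (1:ℂ) else 0) =
      1 - Matrix.diagonal (fun j => if j ∈ J₂ then (1:ℂ) else 0) := by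
    ext i j
    rcases eq_or_ne i j with rfl | hij
    · by_cases h : i ∈ J₂ <;>
        simp [h, Matrix.sub_apply, Matrix.diagonal_apply_eq, Matrix.one_apply_eq]
    · simp [Matrix.sub_apply, Matrix.diagonal_apply_ne _ hij, Matrix.one_apply_ne hij]
  have hWEc : W * Matrix.diagonal (fun j : Fin M => if j ∈ J₂ᶜ then (1:ℂ) else 0) * Wᴴ =
      1 - N := by
    rw [hEc, Matrix.mul_sub, Matrix.mul_one, Matrix.sub_mul, hW2, hNdef]
  -- submatrix identities
  have hsub1 : N.submatrix (fun i : J₁ => (i : Fin M)) (fun i : J₁ => (i : Fin M)) =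
      S' * S'ᴴ := by
    ext j k
    rw [Matrix.submatrix_apply, hNdef, Matrix.mul_apply]
    simp only [Matrix.mul_diagonal, Matrix.conjTranspose_apply]
    rw [Matrix.mul_apply]
    simp only [Matrix.conjTranspose_apply, hS'def, Matrix.of_apply]
    rw [show (∑ x : Fin M, (W (j : Fin M) x * if x ∈ J₂ then (1:ℂ) else 0) * star (W (k : Fin M) x))
        = ∑ x : Fin M, (if x ∈ J₂ then W (j : Fin M) x * star (W (k : Fin M) x) else 0) from
        Finset.sum_congr rfl fun x _ => by by_cases h : x ∈ J₂ <;> simp [h],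
      Finset.sum_ite_mem, Finset.univ_inter,
      ← Finset.sum_coe_sort J₂ (fun m => W (j : Fin M) m * star (W (k : Fin M) m))]
  have hsub2 : N.submatrix (fun i : ↥(J₁ᶜ) => (i : Fin M)) (fun i : ↥(J₁ᶜ) => (i : Fin M)) =
      T' * T'ᴴ := by
    ext j k
    rw [Matrix.submatrix_apply, hNdef, Matrix.mul_apply]
    simp only [Matrix.mul_diagonal, Matrix.conjTranspose_apply]
    rw [Matrix.mul_apply]
    simp only [Matrix.conjTranspose_apply, hT'def, Matrix.of_apply]
    rw [show (∑ x : Fin M, (W (j : Fin M) x * if x ∈ J₂ then (1:ℂ) else 0) * star (W (k : Fin M) x))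
        = ∑ x : Fin M, (if x ∈ J₂ then W (j : Fin M) x * star (W (k : Fin M) x) else 0) from
        Finset.sum_congr rfl fun x _ => by by_cases h : x ∈ J₂ <;> simp [h],
      Finset.sum_ite_mem, Finset.univ_inter,
      ← Finset.sum_coe_sort J₂ (fun m => W (j : Fin M) m * star (W (k : Fin M) m))]
  -- unitarity of columns
  have hcol : ∀ l m : Fin M, ∑ j, star (W j l) * W j m = if l = m then (1:ℂ) else 0 := by
    intro l m
    have := congrFun (congrFun hW1 l) m
    simpa [Matrix.mul_apply, Matrix.conjTranspose_apply, Matrix.one_apply] using this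
  have hTT : (1 : Matrix J₂ J₂ ℂ) - T'ᴴ * T' = S'ᴴ * S' := by
    ext l m
    simp only [Matrix.sub_apply, Matrix.mul_apply, Matrix.conjTranspose_apply,
      Matrix.one_apply, hS'def, hT'def, Matrix.of_apply]
    rw [Finset.sum_coe_sort (J₁ᶜ) (fun j => star (W j (l : Fin M)) * W j (m : Fin M)),
      Finset.sum_coe_sort J₁ (fun j => star (W j (l : Fin M)) * W j (m : Fin M))]
    have h := hcol (l : Fin M) (m : Fin M)
    rw [← Finset.sum_add_sum_compl J₁ (fun j => star (W j (l : Fin M)) * W j (m : Fin M))] at h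
    have hif : (if l = m then (1:ℂ) else 0) =
        (if (l : Fin M) = (m : Fin M) then (1:ℂ) else 0) := by
      rcases eq_or_ne l m with rfl | hlm
      · simp
      · rw [if_neg hlm, if_neg (fun hh => hlm (Subtype.ext hh))]
    rw [sub_eq_iff_eq_add, hif, ← h]
  -- reindexing to Fin n
  set e₁ : Fin n ≃ J₁ := (J₁.orderIsoOfFin h₁).toEquiv with he₁
  set e₂ : Fin n ≃ J₂ := (J₂.orderIsoOfFin h₂).toEquiv with he₂
  have hSsub : S = S'.submatrix e₁ e₂ := by
    ext j k
    rw [hS, Matrix.submatrix_apply]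
    simp only [hS'def, Matrix.of_apply, he₁, he₂]
    rw [hWapp]
    rfl
  have habs : S.det * star S.det = ((‖S.det‖ ^ 2 : ℝ) : ℂ) := by
    rw [Complex.sq_norm]
    exact Complex.mul_conj S.det
  have hdetSS : Matrix.det (S' * S'ᴴ) = ((‖S.det‖ ^ 2 : ℝ) : ℂ) := by
    rw [← Matrix.det_submatrix_equiv_self e₁ (S' * S'ᴴ),
      ← Matrix.submatrix_mul_equiv S' S'ᴴ (⇑e₁) e₂ (⇑e₁),
      ← Matrix.conjTranspose_submatrix, ← hSsub, Matrix.det_mul,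
      Matrix.det_conjTranspose, habs]
  have hdetSS' : Matrix.det (S'ᴴ * S') = ((‖S.det‖ ^ 2 : ℝ) : ℂ) := by
    rw [← Matrix.det_submatrix_equiv_self e₂ (S'ᴴ * S'),
      ← Matrix.submatrix_mul_equiv S'ᴴ S' (⇑e₂) e₁ (⇑e₂),
      ← Matrix.conjTranspose_submatrix, ← hSsub, Matrix.det_mul,
      Matrix.det_conjTranspose, mul_comm, habs]
  -- first quantity
  have hQ1 : Matrix.det (1 - specProj a φ I * specProj b ψ Iᶜ * specProj a φ I) =
      ((‖S.det‖ ^ 2 : ℝ) : ℂ) := by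
    have hK₂ : ∀ j, j ∈ J₂ᶜ ↔ b j ∈ Iᶜ := by
      intro j
      simp [Finset.mem_compl, hJ₂ j]
    rw [hdet I Iᶜ J₁ (J₂ᶜ) hJ₁ hK₂, hWEc, det_corner]
    have : (1 - N).submatrix (fun i : J₁ => (i : Fin M)) (fun i : J₁ => (i : Fin M)) =
        1 - S' * S'ᴴ := by
      ext i j
      rw [Matrix.submatrix_apply, Matrix.sub_apply, Matrix.sub_apply, ← hsub1,
        Matrix.submatrix_apply]
      congr 1
      simp [Matrix.one_apply]
    rw [this, sub_sub_cancel, hdetSS]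
  have hK₁c : ∀ j, j ∈ J₁ᶜ ↔ a j ∈ Iᶜ := by
    intro j
    simp [Finset.mem_compl, hJ₁ j]
  -- second quantity
  have hQ2 : Matrix.det (1 - specProj a φ Iᶜ * specProj b ψ I * specProj a φ Iᶜ) =
      ((‖S.det‖ ^ 2 : ℝ) : ℂ) := by
    rw [hdet Iᶜ I (J₁ᶜ) J₂ hK₁c hJ₂, det_corner]
    have : (1 : Matrix ↥(J₁ᶜ) ↥(J₁ᶜ) ℂ) -
        N.submatrix (fun i : ↥(J₁ᶜ) => (i : Fin M)) (fun i : ↥(J₁ᶜ) => (i : Fin M)) =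
        1 + (-T') * T'ᴴ := by
      rw [hsub2, Matrix.neg_mul, ← sub_eq_add_neg]
    rw [this, Matrix.det_one_add_mul_comm, Matrix.mul_neg, ← sub_eq_add_neg, hTT, hdetSS']
  exact ⟨hQ1.trans hQ2.symm, hQ1⟩
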